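/- Let $L, m > 0$, let $a \in C^0([-L,L])$ be even and positive with $\sqrt{a}$ convex, and let $v \in C^1([-L,L])$ be strictly increasing with $v(L) = -v(-L) = m$. For $t \in [0,1]$ let $v^t$ be the continuous odd rearrangement of $v$ (inverse of $\rho^t(\lambda) = t\rho(\lambda) - (1-t)\rho(-\lambda)$, $\rho = v^{-1}$). Then for all $t \in [0,1]$: $\int_{-L}^L \left(\frac{dv^t}{dx}\right)^2 a(x)\,dx \le \int_{-L}^L \left(\frac{dv}{dx}\right)^2 a(x)\,dx$. -/

import Mathlib

open Set intervalIntegral MeasureTheory Filter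

private lemma contOn_inv_aux (f : ℝ → ℝ) {a b c d : ℝ} (hab : a < b)
    (hmono : StrictMonoOn f (Icc a b)) (himg : f '' (Icc a b) = Icc c d) :
    ContinuousOn f (Icc a b) := by
  have hmem : ∀ x ∈ Icc a b, f x ∈ Icc c d := fun x hx => himg ▸ mem_image_of_mem f hx
  have ha : a ∈ Icc a b := ⟨le_rfl, hab.le⟩
  have hb : b ∈ Icc a b := ⟨hab.le, le_rfl⟩
  intro x hx
  have hsplit : Icc a b ∩ Iic x ∪ Icc a b ∩ Ici x = Icc a b := by
    ext y
    constructor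
    · rintro (⟨hy, _⟩ | ⟨hy, _⟩) <;> exact hy
    · intro hy
      rcases le_total y x with h | h
      · exact Or.inl ⟨hy, h⟩
      · exact Or.inr ⟨hy, h⟩
  rw [ContinuousWithinAt, ← hsplit, nhdsWithin_union, Filter.tendsto_sup]
  constructor
  · rcases eq_or_lt_of_le hx.1 with heq | hax
    · have hs : Icc a b ∩ Iic x = {x} := by
        ext y
        simp only [mem_inter_iff, mem_Icc, mem_Iic, mem_singleton_iff]
        constructor
        · rintro ⟨⟨h1, _⟩, h2⟩; exact le_antisymm h2 (heq ▸ h1)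
        · rintro rfl; exact ⟨⟨hx.1, hx.2⟩, le_rfl⟩
      rw [hs]
      exact continuousWithinAt_singleton
    · have h1 : ContinuousWithinAt f (Iic x) x := by
        apply continuousWithinAt_left_of_monotoneOn_of_image_mem_nhdsWithin hmono.monotoneOn
        · exact Icc_mem_nhdsLE_of_mem ⟨hax, hx.2⟩
        · rw [himg]
          exact Icc_mem_nhdsLE_of_mem ⟨lt_of_le_of_lt (hmem a ha).1 (hmono ha hx hax), (hmem x hx).2⟩
      exact h1.mono inter_subset_right
  · rcases eq_or_lt_of_le hx.2 with heq | hxb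
    · have hs : Icc a b ∩ Ici x = {x} := by
        ext y
        simp only [mem_inter_iff, mem_Icc, mem_Ici, mem_singleton_iff]
        constructor
        · rintro ⟨⟨_, h1⟩, h2⟩; exact le_antisymm (heq ▸ h1) h2
        · rintro rfl; exact ⟨⟨hx.1, hx.2⟩, le_rfl⟩
      rw [hs]
      exact continuousWithinAt_singleton
    · have h1 : ContinuousWithinAt f (Ici x) x := by
        apply continuousWithinAt_right_of_monotoneOn_of_image_mem_nhdsWithin hmono.monotoneOn
        · exact Icc_mem_nhdsGE_of_mem ⟨hx.1, hxb⟩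
        · rw [himg]
          exact Icc_mem_nhdsGE_of_mem ⟨(hmem x hx).1, lt_of_lt_of_le (hmono hx hb hxb) (hmem b hb).2⟩
      exact h1.mono inter_subset_right

set_option maxHeartbeats 2000000 in
theorem stmt_10 (L m : ℝ) (hL : 0 < L) (hm : 0 < m) (a v ρ : ℝ → ℝ) (vT : ℝ → ℝ → ℝ)
    (hac : ContinuousOn a (Icc (-L) L)) (haeven : ∀ x, a (-x) = a x)
    (hapos : ∀ x ∈ Icc (-L) L, 0 < a x)
    (hsqrt : ConvexOn ℝ (Icc (-L) L) (fun x => Real.sqrt (a x)))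
    (hv : ContDiffOn ℝ 1 v (Icc (-L) L)) (hvmono : StrictMonoOn v (Icc (-L) L))
    (hvmaps : MapsTo v (Icc (-L) L) (Icc (-m) m))
    (hvL : v (-L) = -m) (hvR : v L = m)
    (hρmaps : MapsTo ρ (Icc (-m) m) (Icc (-L) L))
    (hρv : ∀ x ∈ Icc (-L) L, ρ (v x) = x)
    (hvρ : ∀ lam ∈ Icc (-m) m, v (ρ lam) = lam)
    (hT : ∀ t ∈ Icc (0:ℝ) 1,
      (MapsTo (vT t) (Icc (-L) L) (Icc (-m) m)) ∧
      (∀ lam ∈ Icc (-m) m, vT t (t * ρ lam - (1 - t) * ρ (-lam)) = lam) ∧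
      (∀ x ∈ Icc (-L) L, t * ρ (vT t x) - (1 - t) * ρ (-(vT t x)) = x)) :
    ∀ t ∈ Icc (0:ℝ) 1,
      (∫ x in (-L)..L, (deriv (vT t) x) ^ 2 * a x) ≤
        ∫ x in (-L)..L, (deriv v x) ^ 2 * a x := by
  have hLL : -L < L := by linarith
  have hmm : -m < m := by linarith
  set V : ℝ → ℝ := fun x => derivWithin v (Icc (-L) L) x with hVdef
  have hVcont : ContinuousOn V (Icc (-L) L) :=
    hv.continuousOn_derivWithin (uniqueDiffOn_Icc hLL) le_rfl
  have hvd : ∀ x ∈ Ioo (-L) L, HasDerivAt v (V x) x := by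
    intro x hx
    have h1 : Icc (-L) L ∈ nhds x := Icc_mem_nhds hx.1 hx.2
    exact ((hv.differentiableOn one_ne_zero) x (Ioo_subset_Icc_self hx)).hasDerivWithinAt.hasDerivAt h1
  have hVnonneg : ∀ x ∈ Ioo (-L) L, 0 ≤ V x := by
    intro x hx
    have hd := hvd x hx
    rw [hasDerivAt_iff_tendsto_slope] at hd
    refine ge_of_tendsto hd ?_
    have hIoo : Ioo (-L) L ∈ nhdsWithin x {x}ᶜ :=
      nhdsWithin_le_nhds (isOpen_Ioo.mem_nhds hx)
    filter_upwards [hIoo, self_mem_nhdsWithin] with y hy hyx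
    have hyx' : y ≠ x := hyx
    rw [slope_def_field]
    rcases lt_or_gt_of_ne hyx' with h | h
    · apply div_nonneg_of_nonpos
      · have := hvmono (Ioo_subset_Icc_self hy) (Ioo_subset_Icc_self hx) h
        linarith
      · linarith
    · apply div_nonneg
      · have := hvmono (Ioo_subset_Icc_self hx) (Ioo_subset_Icc_self hy) h
        linarith
      · linarith
  obtain ⟨xM, hxM, hMmax⟩ := isCompact_Icc.exists_isMaxOn (nonempty_Icc.2 hLL.le) hVcont
  set M : ℝ := V xM with hMdef
  have hMbd : ∀ y ∈ Icc (-L) L, V y ≤ M := fun y hy => hMmax hy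
  have hMnonneg : 0 ≤ M :=
    le_trans (hVnonneg 0 ⟨by linarith, hL⟩) (hMbd 0 ⟨by linarith, hL.le⟩)
  obtain ⟨A, hAbd⟩ := isCompact_Icc.exists_bound_of_continuousOn hac
  have hAnonneg : 0 ≤ A := le_trans (norm_nonneg _) (hAbd 0 ⟨by linarith, hL.le⟩)
  -- ρ facts
  have hmL : -L ∈ Icc (-L) L := ⟨le_rfl, hLL.le⟩
  have hpL : L ∈ Icc (-L) L := ⟨hLL.le, le_rfl⟩
  have hmM : -m ∈ Icc (-m) m := ⟨le_rfl, hmm.le⟩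
  have hpM : m ∈ Icc (-m) m := ⟨hmm.le, le_rfl⟩
  have hρm : ρ (-m) = -L := by rw [← hvL, hρv _ hmL]
  have hρM : ρ m = L := by rw [← hvR, hρv _ hpL]
  have hρmono : StrictMonoOn ρ (Icc (-m) m) := by
    intro p hp q hq hpq
    by_contra hle
    push_neg at hle
    have h := hvmono.monotoneOn (hρmaps hq) (hρmaps hp) hle
    rw [hvρ p hp, hvρ q hq] at h
    linarith
  have hρimg : ρ '' (Icc (-m) m) = Icc (-L) L := by
    apply subset_antisymm
    · rintro _ ⟨p, hp, rfl⟩; exact hρmaps hp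
    · intro x hx; exact ⟨v x, hvmaps hx, hρv x hx⟩
  have hρcont : ContinuousOn ρ (Icc (-m) m) := contOn_inv_aux ρ hmm hρmono hρimg
  have hρIoo : ∀ p ∈ Ioo (-m) m, ρ p ∈ Ioo (-L) L := by
    intro p hp
    constructor
    · have := hρmono hmM (Ioo_subset_Icc_self hp) hp.1
      rwa [hρm] at this
    · have := hρmono (Ioo_subset_Icc_self hp) hpM hp.2
      rwa [hρM] at this
  have hneg : ∀ p ∈ Icc (-m) m, -p ∈ Icc (-m) m := by
    intro p hp
    exact ⟨by linarith [hp.2], by linarith [hp.1]⟩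
  -- the statement for each t
  intro t ht
  obtain ⟨ht0, ht1⟩ := ht
  obtain ⟨hwmaps, hwinv1, hwinv2⟩ := hT t ⟨ht0, ht1⟩
  set w := vT t with hwdef
  -- w facts
  have hρtm : t * ρ (-m) - (1 - t) * ρ (-(-m)) = -L := by
    rw [neg_neg, hρm, hρM]; ring
  have hρtM : t * ρ m - (1 - t) * ρ (-m) = L := by
    rw [hρm, hρM]; ring
  have hρtmono : StrictMonoOn (fun p => t * ρ p - (1 - t) * ρ (-p)) (Icc (-m) m) := by
    intro p hp q hq hpq
    have hm1 : ρ p < ρ q := hρmono hp hq hpq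
    have hm2 : ρ (-q) < ρ (-p) := hρmono (hneg q hq) (hneg p hp) (by linarith)
    simp only
    rcases lt_or_eq_of_le ht0 with h | h
    · have hA1 := mul_lt_mul_of_pos_left hm1 h
      have hB1 := mul_le_mul_of_nonneg_left hm2.le (show (0:ℝ) ≤ 1 - t by linarith)
      linarith
    · have hB1 := mul_lt_mul_of_pos_left hm2 (show (0:ℝ) < 1 - t by linarith)
      rw [← h]
      linarith
  have hρtmaps : MapsTo (fun p => t * ρ p - (1 - t) * ρ (-p)) (Icc (-m) m) (Icc (-L) L) := by
    intro p hp
    have h1 := hρtmono.monotoneOn hmM hp hp.1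
    have h2 := hρtmono.monotoneOn hp hpM hp.2
    rw [hρtm] at h1
    rw [hρtM] at h2
    exact ⟨h1, h2⟩
  have hwimg : w '' (Icc (-L) L) = Icc (-m) m := by
    apply subset_antisymm
    · rintro _ ⟨x, hx, rfl⟩; exact hwmaps hx
    · intro p hp
      exact ⟨t * ρ p - (1 - t) * ρ (-p), hρtmaps hp, hwinv1 p hp⟩
  have hwmono : StrictMonoOn w (Icc (-L) L) := by
    intro x hx y hy hxy
    by_contra hle
    push_neg at hle
    have h := hρtmono.monotoneOn (hwmaps hy) (hwmaps hx) hle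
    rw [hwinv2 x hx, hwinv2 y hy] at h
    linarith
  have hwcont : ContinuousOn w (Icc (-L) L) := contOn_inv_aux w hLL hwmono hwimg
  have hwL : w (-L) = -m := by
    have h := hwinv1 (-m) hmM
    rwa [hρtm] at h
  have hwR : w L = m := by
    have h := hwinv1 m hpM
    rwa [hρtM] at h
  have hwIoo : ∀ x ∈ Ioo (-L) L, w x ∈ Ioo (-m) m := by
    intro x hx
    constructor
    · have := hwmono hmL (Ioo_subset_Icc_self hx) hx.1
      rwa [hwL] at this
    · have := hwmono (Ioo_subset_Icc_self hx) hpL hx.2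
      rwa [hwR] at this
  -- integrand functions
  set g : ℝ → ℝ := fun p => V (ρ p) * a (ρ p) with hgdef
  have hgcont : ContinuousOn g (Icc (-m) m) :=
    (hVcont.comp hρcont hρmaps).mul (hac.comp hρcont hρmaps)
  have hnegcont : ContinuousOn (fun p : ℝ => g (-p)) (Icc (-m) m) :=
    hgcont.comp continuous_neg.continuousOn hneg
  set H : ℝ → ℝ := fun p => t * g p + (1 - t) * g (-p) with hHdef
  have hHcont : ContinuousOn H (Icc (-m) m) :=
    (continuousOn_const.mul hgcont).add (continuousOn_const.mul hnegcont)
  obtain ⟨B, hBbd⟩ := isCompact_Icc.exists_bound_of_continuousOn hHcont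
  have hBnonneg : 0 ≤ B := le_trans (norm_nonneg _) (hBbd 0 ⟨by linarith, hm.le⟩)
  set Ψ : ℝ → ℝ := fun p => ∫ s in (-m)..p, H s with hΨdef
  have hHint : IntegrableOn H (uIcc (-m) m) volume := by
    rw [uIcc_of_le hmm.le]
    exact hHcont.integrableOn_Icc
  have hΨcont : ContinuousOn Ψ (Icc (-m) m) := by
    have := intervalIntegral.continuousOn_primitive_interval hHint
    rwa [uIcc_of_le hmm.le] at this
  have hΨd : ∀ p ∈ Ioo (-m) m, HasDerivAt Ψ (H p) p := by
    intro p hp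
    apply intervalIntegral.integral_hasDerivAt_right
    · exact ((hHcont.mono (Icc_subset_Icc le_rfl hp.2.le)).intervalIntegrable_of_Icc hp.1.le)
    · exact ⟨Ioo (-m) m, isOpen_Ioo.mem_nhds hp,
        (hHcont.mono Ioo_subset_Icc_self).aestronglyMeasurable measurableSet_Ioo⟩
    · exact hHcont.continuousAt (Icc_mem_nhds hp.1 hp.2)
  -- key pointwise fact
  have hkey : ∀ x ∈ Ioo (-L) L, ∃ d : ℝ, HasDerivAt w d x ∧ 0 ≤ d ∧ d ≤ 2 * M ∧
      d ^ 2 * a x ≤ d * H (w x) := by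
    intro x hx
    have hxIcc : x ∈ Icc (-L) L := Ioo_subset_Icc_self hx
    have hlamI : w x ∈ Ioo (-m) m := hwIoo x hx
    have hlamIcc : w x ∈ Icc (-m) m := Ioo_subset_Icc_self hlamI
    have hnlamI : -(w x) ∈ Ioo (-m) m := ⟨by linarith [hlamI.2], by linarith [hlamI.1]⟩
    have hnlamIcc : -(w x) ∈ Icc (-m) m := Ioo_subset_Icc_self hnlamI
    have hx₁ : ρ (w x) ∈ Ioo (-L) L := hρIoo _ hlamI
    have hx₂ : ρ (-(w x)) ∈ Ioo (-L) L := hρIoo _ hnlamI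
    have hwcx : ContinuousAt w x := hwcont.continuousAt (Icc_mem_nhds hx.1 hx.2)
    by_cases hcaseA : 0 < t ∧ V (ρ (w x)) = 0
    · refine ⟨0, ?_, le_rfl, by linarith, by simp⟩
      obtain ⟨htpos, hV1⟩ := hcaseA
      rw [hasDerivAt_iff_tendsto_slope, Metric.tendsto_nhds]
      intro ε hε
      have hε' : 0 < t * (ε / 2) := by positivity
      obtain ⟨δ, hδpos, hδ⟩ := Metric.continuousAt_iff.1
        (hVcont.continuousAt (Icc_mem_nhds hx₁.1 hx₁.2)) _ hε'
      have hρcx : ContinuousAt (fun y => ρ (w y)) x :=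
        (hρcont.continuousAt (Icc_mem_nhds hlamI.1 hlamI.2)).comp hwcx
      have hev1 : ∀ᶠ y in nhds x, dist (ρ (w y)) (ρ (w x)) < δ := by
        have h := hρcx.eventually_mem (Metric.ball_mem_nhds (ρ (w x)) hδpos)
        simpa [Metric.mem_ball] using h
      have hev2 : ∀ᶠ y in nhds x, y ∈ Ioo (-L) L := isOpen_Ioo.eventually_mem hx
      rw [eventually_nhdsWithin_iff]
      filter_upwards [hev1, hev2] with y h1 h2 hyne
      rw [mem_compl_iff, mem_singleton_iff] at hyne
      have hyIcc : y ∈ Icc (-L) L := Ioo_subset_Icc_self h2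
      have hyM : w y ∈ Icc (-m) m := hwmaps hyIcc
      have e1 := hwinv2 y hyIcc
      have e2 := hwinv2 x hxIcc
      have hmain : |w y - w x| ≤ ε / 2 * |y - x| := by
        rcases lt_or_gt_of_ne hyne with hlt | hgt
        · have hwlt : w y < w x := hwmono hyIcc hxIcc hlt
          have hρlt : ρ (w y) < ρ (w x) := hρmono hyM hlamIcc hwlt
          obtain ⟨ξ, hξ, hξs⟩ := exists_hasDerivAt_eq_slope v V hρlt
            (hv.continuousOn.mono (Icc_subset_Icc (hρmaps hyM).1 (hρmaps hlamIcc).2))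
            (fun z hz => hvd z ⟨lt_of_le_of_lt (hρmaps hyM).1 hz.1,
              lt_of_lt_of_le hz.2 (hρmaps hlamIcc).2⟩)
          rw [hvρ _ hlamIcc, hvρ _ hyM] at hξs
          have hdist : |ρ (w y) - ρ (w x)| < δ := by rwa [Real.dist_eq] at h1
          rw [abs_lt] at hdist
          have hξδ : dist ξ (ρ (w x)) < δ := by
            rw [Real.dist_eq, abs_lt]
            constructor
            · linarith [hξ.1, hdist.1]
            · linarith [hξ.2, hδpos]
          have hVξ : V ξ < t * (ε / 2) := by
            have h := hδ hξδ
            rw [Real.dist_eq, hV1, sub_zero] at h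
            exact lt_of_le_of_lt (le_abs_self _) h
          have hρpos : (0:ℝ) < ρ (w x) - ρ (w y) := by linarith
          have hnum : w x - w y = V ξ * (ρ (w x) - ρ (w y)) := by
            rw [eq_div_iff (ne_of_gt hρpos)] at hξs
            linarith
          have hm2 := hρmono.monotoneOn (hneg _ hlamIcc) (hneg _ hyM) (by linarith : -(w x) ≤ -(w y))
          have hx' := mul_le_mul_of_nonneg_left hm2 (show (0:ℝ) ≤ 1 - t by linarith)
          have hexp : t * (ρ (w x) - ρ (w y)) = t * ρ (w x) - t * ρ (w y) := by ring
          have hden : t * (ρ (w x) - ρ (w y)) ≤ x - y := by linarith [e1, e2, hx', hexp]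
          have h1' : w x - w y ≤ t * (ε / 2) * (ρ (w x) - ρ (w y)) := by
            rw [hnum]
            exact mul_le_mul_of_nonneg_right hVξ.le hρpos.le
          have heq : t * (ε / 2) * (ρ (w x) - ρ (w y)) = ε / 2 * (t * (ρ (w x) - ρ (w y))) := by
            ring
          have h2' := mul_le_mul_of_nonneg_left hden (show (0:ℝ) ≤ ε / 2 by linarith)
          rw [abs_of_neg (by linarith : w y - w x < 0), abs_of_neg (by linarith : y - x < 0)]
          linarith
        · have hwlt : w x < w y := hwmono hxIcc hyIcc hgt
          have hρlt : ρ (w x) < ρ (w y) := hρmono hlamIcc hyM hwlt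
          obtain ⟨ξ, hξ, hξs⟩ := exists_hasDerivAt_eq_slope v V hρlt
            (hv.continuousOn.mono (Icc_subset_Icc (hρmaps hlamIcc).1 (hρmaps hyM).2))
            (fun z hz => hvd z ⟨lt_of_le_of_lt (hρmaps hlamIcc).1 hz.1,
              lt_of_lt_of_le hz.2 (hρmaps hyM).2⟩)
          rw [hvρ _ hyM, hvρ _ hlamIcc] at hξs
          have hdist : |ρ (w y) - ρ (w x)| < δ := by rwa [Real.dist_eq] at h1
          rw [abs_lt] at hdist
          have hξδ : dist ξ (ρ (w x)) < δ := by
            rw [Real.dist_eq, abs_lt]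
            constructor
            · linarith [hξ.1, hδpos]
            · linarith [hξ.2, hdist.2]
          have hVξ : V ξ < t * (ε / 2) := by
            have h := hδ hξδ
            rw [Real.dist_eq, hV1, sub_zero] at h
            exact lt_of_le_of_lt (le_abs_self _) h
          have hρpos : (0:ℝ) < ρ (w y) - ρ (w x) := by linarith
          have hnum : w y - w x = V ξ * (ρ (w y) - ρ (w x)) := by
            rw [eq_div_iff (ne_of_gt hρpos)] at hξs
            linarith
          have hm2 := hρmono.monotoneOn (hneg _ hyM) (hneg _ hlamIcc) (by linarith : -(w y) ≤ -(w x))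
          have hx' := mul_le_mul_of_nonneg_left hm2 (show (0:ℝ) ≤ 1 - t by linarith)
          have hexp : t * (ρ (w y) - ρ (w x)) = t * ρ (w y) - t * ρ (w x) := by ring
          have hden : t * (ρ (w y) - ρ (w x)) ≤ y - x := by linarith [e1, e2, hx', hexp]
          have h1' : w y - w x ≤ t * (ε / 2) * (ρ (w y) - ρ (w x)) := by
            rw [hnum]
            exact mul_le_mul_of_nonneg_right hVξ.le hρpos.le
          have heq : t * (ε / 2) * (ρ (w y) - ρ (w x)) = ε / 2 * (t * (ρ (w y) - ρ (w x))) := by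
            ring
          have h2' := mul_le_mul_of_nonneg_left hden (show (0:ℝ) ≤ ε / 2 by linarith)
          rw [abs_of_pos (by linarith : 0 < w y - w x), abs_of_pos (by linarith : 0 < y - x)]
          linarith
      have habs : 0 < |y - x| := abs_pos.2 (sub_ne_zero.2 hyne)
      rw [dist_zero_right, slope_def_field, Real.norm_eq_abs, abs_div]
      rw [div_lt_iff₀ habs]
      have hmul := mul_lt_mul_of_pos_right (show ε / 2 < ε by linarith) habs
      linarith
    by_cases hcaseB : t < 1 ∧ V (ρ (-(w x))) = 0
    · refine ⟨0, ?_, le_rfl, by linarith, by simp⟩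
      obtain ⟨htpos, hV2⟩ := hcaseB
      rw [hasDerivAt_iff_tendsto_slope, Metric.tendsto_nhds]
      intro ε hε
      have hε' : 0 < (1 - t) * (ε / 2) := by
        have : 0 < 1 - t := by linarith
        positivity
      obtain ⟨δ, hδpos, hδ⟩ := Metric.continuousAt_iff.1
        (hVcont.continuousAt (Icc_mem_nhds hx₂.1 hx₂.2)) _ hε'
      have hρcx : ContinuousAt (fun y => ρ (-(w y))) x := by
        have hn1 : ContinuousAt (fun y => -(w y)) x := hwcx.neg
        exact ContinuousAt.comp (f := fun y => -(w y))
          (hρcont.continuousAt (Icc_mem_nhds hnlamI.1 hnlamI.2)) hn1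
      have hev1 : ∀ᶠ y in nhds x, dist (ρ (-(w y))) (ρ (-(w x))) < δ := by
        have h := hρcx.eventually_mem (Metric.ball_mem_nhds (ρ (-(w x))) hδpos)
        simpa [Metric.mem_ball] using h
      have hev2 : ∀ᶠ y in nhds x, y ∈ Ioo (-L) L := isOpen_Ioo.eventually_mem hx
      rw [eventually_nhdsWithin_iff]
      filter_upwards [hev1, hev2] with y h1 h2 hyne
      rw [mem_compl_iff, mem_singleton_iff] at hyne
      have hyIcc : y ∈ Icc (-L) L := Ioo_subset_Icc_self h2
      have hyM : w y ∈ Icc (-m) m := hwmaps hyIcc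
      have hynM : -(w y) ∈ Icc (-m) m := hneg _ hyM
      have e1 := hwinv2 y hyIcc
      have e2 := hwinv2 x hxIcc
      have hmain : |w y - w x| ≤ ε / 2 * |y - x| := by
        rcases lt_or_gt_of_ne hyne with hlt | hgt
        · have hwlt : w y < w x := hwmono hyIcc hxIcc hlt
          have hρlt : ρ (-(w x)) < ρ (-(w y)) := hρmono hnlamIcc hynM (by linarith)
          obtain ⟨ξ, hξ, hξs⟩ := exists_hasDerivAt_eq_slope v V hρlt
            (hv.continuousOn.mono (Icc_subset_Icc (hρmaps hnlamIcc).1 (hρmaps hynM).2))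
            (fun z hz => hvd z ⟨lt_of_le_of_lt (hρmaps hnlamIcc).1 hz.1,
              lt_of_lt_of_le hz.2 (hρmaps hynM).2⟩)
          rw [hvρ _ hynM, hvρ _ hnlamIcc] at hξs
          have hdist : |ρ (-(w y)) - ρ (-(w x))| < δ := by rwa [Real.dist_eq] at h1
          rw [abs_lt] at hdist
          have hξδ : dist ξ (ρ (-(w x))) < δ := by
            rw [Real.dist_eq, abs_lt]
            constructor
            · linarith [hξ.1, hδpos]
            · linarith [hξ.2, hdist.2]
          have hVξ : V ξ < (1 - t) * (ε / 2) := by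
            have h := hδ hξδ
            rw [Real.dist_eq, hV2, sub_zero] at h
            exact lt_of_le_of_lt (le_abs_self _) h
          have hρpos : (0:ℝ) < ρ (-(w y)) - ρ (-(w x)) := by linarith
          have hnum : w x - w y = V ξ * (ρ (-(w y)) - ρ (-(w x))) := by
            rw [eq_div_iff (ne_of_gt hρpos)] at hξs
            linarith
          have hm2 := hρmono.monotoneOn hyM hlamIcc hwlt.le
          have hx' := mul_le_mul_of_nonneg_left hm2 ht0
          have hexp : (1 - t) * (ρ (-(w y)) - ρ (-(w x))) =
              (1 - t) * ρ (-(w y)) - (1 - t) * ρ (-(w x)) := by ring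
          have hden : (1 - t) * (ρ (-(w y)) - ρ (-(w x))) ≤ x - y := by
            linarith [e1, e2, hx', hexp]
          have h1' : w x - w y ≤ (1 - t) * (ε / 2) * (ρ (-(w y)) - ρ (-(w x))) := by
            rw [hnum]
            exact mul_le_mul_of_nonneg_right hVξ.le hρpos.le
          have heq : (1 - t) * (ε / 2) * (ρ (-(w y)) - ρ (-(w x))) =
              ε / 2 * ((1 - t) * (ρ (-(w y)) - ρ (-(w x)))) := by ring
          have h2' := mul_le_mul_of_nonneg_left hden (show (0:ℝ) ≤ ε / 2 by linarith)
          rw [abs_of_neg (by linarith : w y - w x < 0), abs_of_neg (by linarith : y - x < 0)]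
          linarith
        · have hwlt : w x < w y := hwmono hxIcc hyIcc hgt
          have hρlt : ρ (-(w y)) < ρ (-(w x)) := hρmono hynM hnlamIcc (by linarith)
          obtain ⟨ξ, hξ, hξs⟩ := exists_hasDerivAt_eq_slope v V hρlt
            (hv.continuousOn.mono (Icc_subset_Icc (hρmaps hynM).1 (hρmaps hnlamIcc).2))
            (fun z hz => hvd z ⟨lt_of_le_of_lt (hρmaps hynM).1 hz.1,
              lt_of_lt_of_le hz.2 (hρmaps hnlamIcc).2⟩)
          rw [hvρ _ hnlamIcc, hvρ _ hynM] at hξs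
          have hdist : |ρ (-(w y)) - ρ (-(w x))| < δ := by rwa [Real.dist_eq] at h1
          rw [abs_lt] at hdist
          have hξδ : dist ξ (ρ (-(w x))) < δ := by
            rw [Real.dist_eq, abs_lt]
            constructor
            · linarith [hξ.1, hdist.1]
            · linarith [hξ.2, hδpos]
          have hVξ : V ξ < (1 - t) * (ε / 2) := by
            have h := hδ hξδ
            rw [Real.dist_eq, hV2, sub_zero] at h
            exact lt_of_le_of_lt (le_abs_self _) h
          have hρpos : (0:ℝ) < ρ (-(w x)) - ρ (-(w y)) := by linarith
          have hnum : w y - w x = V ξ * (ρ (-(w x)) - ρ (-(w y))) := by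
            rw [eq_div_iff (ne_of_gt hρpos)] at hξs
            linarith
          have hm2 := hρmono.monotoneOn hlamIcc hyM hwlt.le
          have hx' := mul_le_mul_of_nonneg_left hm2 ht0
          have hexp : (1 - t) * (ρ (-(w x)) - ρ (-(w y))) =
              (1 - t) * ρ (-(w x)) - (1 - t) * ρ (-(w y)) := by ring
          have hden : (1 - t) * (ρ (-(w x)) - ρ (-(w y))) ≤ y - x := by
            linarith [e1, e2, hx', hexp]
          have h1' : w y - w x ≤ (1 - t) * (ε / 2) * (ρ (-(w x)) - ρ (-(w y))) := by
            rw [hnum]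
            exact mul_le_mul_of_nonneg_right hVξ.le hρpos.le
          have heq : (1 - t) * (ε / 2) * (ρ (-(w x)) - ρ (-(w y))) =
              ε / 2 * ((1 - t) * (ρ (-(w x)) - ρ (-(w y)))) := by ring
          have h2' := mul_le_mul_of_nonneg_left hden (show (0:ℝ) ≤ ε / 2 by linarith)
          rw [abs_of_pos (by linarith : 0 < w y - w x), abs_of_pos (by linarith : 0 < y - x)]
          linarith
      have habs : 0 < |y - x| := abs_pos.2 (sub_ne_zero.2 hyne)
      rw [dist_zero_right, slope_def_field, Real.norm_eq_abs, abs_div]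
      rw [div_lt_iff₀ habs]
      have hmul := mul_lt_mul_of_pos_right (show ε / 2 < ε by linarith) habs
      linarith
    -- Case C
    push_neg at hcaseA hcaseB
    have hc1 : t = 0 ∨ 0 < V (ρ (w x)) := by
      rcases eq_or_lt_of_le ht0 with h | h
      · exact Or.inl h.symm
      · exact Or.inr (lt_of_le_of_ne (hVnonneg _ hx₁) (Ne.symm (hcaseA h)))
    have hc2 : t = 1 ∨ 0 < V (ρ (-(w x))) := by
      rcases eq_or_lt_of_le ht1 with h | h
      · exact Or.inl h
      · exact Or.inr (lt_of_le_of_ne (hVnonneg _ hx₂) (Ne.symm (hcaseB h)))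
    have hQpos : 0 < t / V (ρ (w x)) + (1 - t) / V (ρ (-(w x))) := by
      rcases eq_or_lt_of_le ht0 with h | h
      · rcases hc2 with h2 | h2
        · exfalso
          rw [← h] at h2
          norm_num at h2
        · have hp : 0 < (1 - t) / V (ρ (-(w x))) := div_pos (by linarith) h2
          have h0 : t / V (ρ (w x)) = 0 := by rw [← h, zero_div]
          linarith
      · have hV1pos : 0 < V (ρ (w x)) := by
          rcases hc1 with hh | hh
          · exact absurd hh (ne_of_gt h)
          · exact hh
        have ht' : 0 < t / V (ρ (w x)) := div_pos h hV1pos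
        have h2' : 0 ≤ (1 - t) / V (ρ (-(w x))) := div_nonneg (by linarith) (hVnonneg _ hx₂)
        linarith
    have hd1 : HasDerivAt (fun p => t * ρ p) (t / V (ρ (w x))) (w x) := by
      rcases hc1 with h1 | h1
      · rw [h1]
        simp only [zero_mul, zero_div]
        exact hasDerivAt_const _ _
      · have hρd : HasDerivAt ρ (V (ρ (w x)))⁻¹ (w x) := by
          apply HasDerivAt.of_local_left_inverse
            (hρcont.continuousAt (Icc_mem_nhds hlamI.1 hlamI.2)) (hvd _ hx₁) (ne_of_gt h1)
          filter_upwards [Icc_mem_nhds hlamI.1 hlamI.2] with p hp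
          exact hvρ p hp
        have h := hρd.const_mul t
        simpa [div_eq_mul_inv] using h
    have hd2 : HasDerivAt (fun p => (1 - t) * ρ (-p)) (-((1 - t) / V (ρ (-(w x))))) (w x) := by
      rcases hc2 with h1 | h1
      · rw [h1]
        simp only [sub_self, zero_mul, zero_div, neg_zero]
        exact hasDerivAt_const _ _
      · have hρd : HasDerivAt ρ (V (ρ (-(w x))))⁻¹ (-(w x)) := by
          apply HasDerivAt.of_local_left_inverse
            (hρcont.continuousAt (Icc_mem_nhds hnlamI.1 hnlamI.2)) (hvd _ hx₂) (ne_of_gt h1)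
          filter_upwards [Icc_mem_nhds hnlamI.1 hnlamI.2] with p hp
          exact hvρ p hp
        have hn : HasDerivAt (fun p : ℝ => ρ (-p)) (-(V (ρ (-(w x))))⁻¹) (w x) := by
          have h := hρd.comp (w x) (hasDerivAt_neg' (w x))
          simpa [Function.comp_def] using h
        have h := hn.const_mul (1 - t)
        have e : -((1 - t) / V (ρ (-(w x)))) = (1 - t) * -(V (ρ (-(w x))))⁻¹ := by ring
        rw [e]; exact h
    have hρtd : HasDerivAt (fun p => t * ρ p - (1 - t) * ρ (-p))
        (t / V (ρ (w x)) + (1 - t) / V (ρ (-(w x)))) (w x) := by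
      have h := hd1.sub hd2
      have e : t / V (ρ (w x)) + (1 - t) / V (ρ (-(w x))) =
          t / V (ρ (w x)) - -((1 - t) / V (ρ (-(w x)))) := by ring
      rw [e]; exact h
    have hwd : HasDerivAt w (t / V (ρ (w x)) + (1 - t) / V (ρ (-(w x))))⁻¹ x := by
      apply HasDerivAt.of_local_left_inverse hwcx hρtd (ne_of_gt hQpos)
      filter_upwards [Icc_mem_nhds hx.1 hx.2] with y hy
      exact hwinv2 y hy
    have hbd : (t / V (ρ (w x)) + (1 - t) / V (ρ (-(w x))))⁻¹ ≤ 2 * M := by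
      rcases le_or_gt (1/2 : ℝ) t with hhalf | hhalf
      · have hV1pos : 0 < V (ρ (w x)) := by
          rcases hc1 with h1 | h1
          · exfalso; rw [h1] at hhalf; norm_num at hhalf
          · exact h1
        have h1 : t / V (ρ (w x)) ≤ t / V (ρ (w x)) + (1 - t) / V (ρ (-(w x))) :=
          le_add_of_nonneg_right (div_nonneg (by linarith) (hVnonneg _ hx₂))
        have h2 := inv_anti₀ (div_pos (by linarith : (0:ℝ) < t) hV1pos) h1
        rw [inv_div] at h2
        have h3 : V (ρ (w x)) / t ≤ 2 * M := by
          rw [div_le_iff₀ (by linarith : (0:ℝ) < t)]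
          have hVM := hMbd _ (Ioo_subset_Icc_self hx₁)
          nlinarith [mul_nonneg hMnonneg (by linarith : (0:ℝ) ≤ t - 1/2)]
        linarith
      · have hV2pos : 0 < V (ρ (-(w x))) := by
          rcases hc2 with h1 | h1
          · exfalso; rw [h1] at hhalf; norm_num at hhalf
          · exact h1
        have h1 : (1 - t) / V (ρ (-(w x))) ≤ t / V (ρ (w x)) + (1 - t) / V (ρ (-(w x))) :=
          le_add_of_nonneg_left (div_nonneg ht0 (hVnonneg _ hx₁))
        have h2 := inv_anti₀ (div_pos (by linarith : (0:ℝ) < 1 - t) hV2pos) h1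
        rw [inv_div] at h2
        have h3 : V (ρ (-(w x))) / (1 - t) ≤ 2 * M := by
          rw [div_le_iff₀ (by linarith : (0:ℝ) < 1 - t)]
          have hVM := hMbd _ (Ioo_subset_Icc_self hx₂)
          nlinarith [mul_nonneg hMnonneg (by linarith : (0:ℝ) ≤ 1/2 - t)]
        linarith
    have hH : H (w x) = t * (V (ρ (w x)) * a (ρ (w x))) +
        (1 - t) * (V (ρ (-(w x))) * a (ρ (-(w x)))) := rfl
    have ha1 : 0 < a (ρ (w x)) := hapos _ (Ioo_subset_Icc_self hx₁)
    have ha2 : 0 < a (ρ (-(w x))) := hapos _ (Ioo_subset_Icc_self hx₂)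
    have hax0 : 0 < a x := hapos _ hxIcc
    have hconv : Real.sqrt (a x) ≤
        t * Real.sqrt (a (ρ (w x))) + (1 - t) * Real.sqrt (a (ρ (-(w x)))) := by
      have hmem2 : -(ρ (-(w x))) ∈ Icc (-L) L := ⟨by linarith [hx₂.2], by linarith [hx₂.1]⟩
      have h := hsqrt.2 (Ioo_subset_Icc_self hx₁) hmem2 ht0 (by linarith : (0:ℝ) ≤ 1 - t)
        (by ring)
      simp only [smul_eq_mul] at h
      have hxeq : t * ρ (w x) + (1 - t) * -(ρ (-(w x))) = x := by
        have h2 := hwinv2 x hxIcc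
        linear_combination h2
      rw [hxeq, haeven (ρ (-(w x)))] at h
      exact h
    have hsq : a x ≤
        (t * Real.sqrt (a (ρ (w x))) + (1 - t) * Real.sqrt (a (ρ (-(w x)))))^2 := by
      nlinarith [Real.sq_sqrt hax0.le, hconv, Real.sqrt_nonneg (a x),
        Real.sqrt_nonneg (a (ρ (w x))), Real.sqrt_nonneg (a (ρ (-(w x))))]
    set s1 := Real.sqrt (a (ρ (w x))) with hs1def
    set s2 := Real.sqrt (a (ρ (-(w x)))) with hs2def
    have hs1 : s1 ^ 2 = a (ρ (w x)) := Real.sq_sqrt ha1.le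
    have hs2 : s2 ^ 2 = a (ρ (-(w x))) := Real.sq_sqrt ha2.le
    have hQH : a x ≤ (t / V (ρ (w x)) + (1 - t) / V (ρ (-(w x)))) * H (w x) := by
      rcases eq_or_lt_of_le ht0 with h0 | h0
      · rcases hc2 with h1 | h1
        · exfalso
          rw [← h0] at h1
          norm_num at h1
        · rw [hH, ← h0]
          have heq : ((0:ℝ) / V (ρ (w x)) + (1 - 0) / V (ρ (-(w x)))) *
              (0 * (V (ρ (w x)) * a (ρ (w x))) +
                (1 - 0) * (V (ρ (-(w x))) * a (ρ (-(w x))))) = a (ρ (-(w x))) := by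
            field_simp
            ring
          rw [heq]
          rw [← h0] at hsq
          nlinarith [hsq, hs2]
      rcases eq_or_lt_of_le ht1 with h1' | h1'
      · have hV1 : 0 < V (ρ (w x)) := by
          rcases hc1 with hh | hh
          · exact absurd hh (ne_of_gt h0)
          · exact hh
        rw [hH, h1']
        have heq : ((1:ℝ) / V (ρ (w x)) + (1 - 1) / V (ρ (-(w x)))) *
            (1 * (V (ρ (w x)) * a (ρ (w x))) +
              (1 - 1) * (V (ρ (-(w x))) * a (ρ (-(w x))))) = a (ρ (w x)) := by
          field_simp
          ring
        rw [heq]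
        rw [h1'] at hsq
        nlinarith [hsq, hs1]
      · have hV1 : 0 < V (ρ (w x)) := by
          rcases hc1 with hh | hh
          · exact absurd hh (ne_of_gt h0)
          · exact hh
        have hV2 : 0 < V (ρ (-(w x))) := by
          rcases hc2 with hh | hh
          · exact absurd hh (ne_of_lt h1')
          · exact hh
        have key : (t * s1 + (1 - t) * s2)^2 * (V (ρ (w x)) * V (ρ (-(w x)))) ≤
            (t * V (ρ (-(w x))) + (1 - t) * V (ρ (w x))) *
              (t * (V (ρ (w x)) * s1^2) + (1 - t) * (V (ρ (-(w x))) * s2^2)) := by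
          nlinarith [mul_nonneg (mul_nonneg h0.le (by linarith : (0:ℝ) ≤ 1 - t))
            (sq_nonneg (V (ρ (w x)) * s1 - V (ρ (-(w x))) * s2))]
        rw [hH, ← hs1, ← hs2]
        have hQeq : t / V (ρ (w x)) + (1 - t) / V (ρ (-(w x))) =
            (t * V (ρ (-(w x))) + (1 - t) * V (ρ (w x))) /
              (V (ρ (w x)) * V (ρ (-(w x)))) := by
          field_simp
        rw [hQeq, div_mul_eq_mul_div, le_div_iff₀ (mul_pos hV1 hV2)]
        calc a x * (V (ρ (w x)) * V (ρ (-(w x)))) ≤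
            (t * s1 + (1 - t) * s2)^2 * (V (ρ (w x)) * V (ρ (-(w x)))) :=
          mul_le_mul_of_nonneg_right hsq (mul_pos hV1 hV2).le
        _ ≤ _ := key
    refine ⟨_, hwd, inv_nonneg.2 hQpos.le, hbd, ?_⟩
    have hQi : 0 ≤ (t / V (ρ (w x)) + (1 - t) / V (ρ (-(w x))))⁻¹ := inv_nonneg.2 hQpos.le
    calc ((t / V (ρ (w x)) + (1 - t) / V (ρ (-(w x))))⁻¹) ^ 2 * a x
        = (t / V (ρ (w x)) + (1 - t) / V (ρ (-(w x))))⁻¹ *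
          ((t / V (ρ (w x)) + (1 - t) / V (ρ (-(w x))))⁻¹ * a x) := by ring
      _ ≤ (t / V (ρ (w x)) + (1 - t) / V (ρ (-(w x))))⁻¹ *
          ((t / V (ρ (w x)) + (1 - t) / V (ρ (-(w x))))⁻¹ *
            ((t / V (ρ (w x)) + (1 - t) / V (ρ (-(w x)))) * H (w x))) := by
          apply mul_le_mul_of_nonneg_left _ hQi
          exact mul_le_mul_of_nonneg_left hQH hQi
      _ = (t / V (ρ (w x)) + (1 - t) / V (ρ (-(w x))))⁻¹ * H (w x) := by
          field_simp
  -- almost-everywhere avoidance of endpoints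
  have haeL : ∀ᵐ x : ℝ, x ≠ L := by
    rw [MeasureTheory.ae_iff]
    have h : {x : ℝ | ¬x ≠ L} = {L} := by ext; simp
    rw [h]
    exact measure_singleton L
  have haemL : ∀ᵐ x : ℝ, x ≠ -L := by
    rw [MeasureTheory.ae_iff]
    have h : {x : ℝ | ¬x ≠ -L} = {-L} := by ext; simp
    rw [h]
    exact measure_singleton (-L)
  have hwmeas : Measurable (deriv w) := measurable_deriv w
  have Int1 : IntervalIntegrable (fun x => (deriv w x) ^ 2 * a x) volume (-L) L := by
    rw [intervalIntegrable_iff_integrableOn_Ioc_of_le hLL.le]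
    apply Integrable.mono' (g := fun _ => (2 * M) ^ 2 * A)
    · exact integrableOn_const measure_Ioc_lt_top.ne
    · exact ((hwmeas.pow_const 2).aestronglyMeasurable).mul
        ((hac.mono Ioc_subset_Icc_self).aestronglyMeasurable measurableSet_Ioc)
    · rw [ae_restrict_iff' measurableSet_Ioc]
      filter_upwards [haeL] with x hne hxIoc
      have hxIoo : x ∈ Ioo (-L) L := ⟨hxIoc.1, lt_of_le_of_ne hxIoc.2 hne⟩
      obtain ⟨d, hd, hd0, hdM, _⟩ := hkey x hxIoo
      rw [hd.deriv, Real.norm_eq_abs, abs_mul]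
      have hax : |a x| ≤ A := by
        have := hAbd x (Ioc_subset_Icc_self hxIoc)
        rwa [Real.norm_eq_abs] at this
      have h1 : |d ^ 2| = d ^ 2 := abs_of_nonneg (sq_nonneg d)
      rw [h1]
      have hdd : d ^ 2 ≤ (2 * M) ^ 2 := by nlinarith
      calc d ^ 2 * |a x| ≤ (2 * M) ^ 2 * |a x| :=
            mul_le_mul_of_nonneg_right hdd (abs_nonneg _)
        _ ≤ (2 * M) ^ 2 * A := mul_le_mul_of_nonneg_left hax (by positivity)
  have Int2 : IntervalIntegrable (fun x => deriv w x * H (w x)) volume (-L) L := by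
    rw [intervalIntegrable_iff_integrableOn_Ioc_of_le hLL.le]
    apply Integrable.mono' (g := fun _ => 2 * M * B)
    · exact integrableOn_const measure_Ioc_lt_top.ne
    · exact (hwmeas.aestronglyMeasurable).mul
        (((hHcont.comp hwcont hwmaps).mono Ioc_subset_Icc_self).aestronglyMeasurable
          measurableSet_Ioc)
    · rw [ae_restrict_iff' measurableSet_Ioc]
      filter_upwards [haeL] with x hne hxIoc
      have hxIoo : x ∈ Ioo (-L) L := ⟨hxIoc.1, lt_of_le_of_ne hxIoc.2 hne⟩
      obtain ⟨d, hd, hd0, hdM, _⟩ := hkey x hxIoo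
      rw [hd.deriv, Real.norm_eq_abs, abs_mul]
      have hax : |H (w x)| ≤ B := by
        have := hBbd (w x) (hwmaps (Ioc_subset_Icc_self hxIoc))
        rwa [Real.norm_eq_abs] at this
      have h1 : |d| = d := abs_of_nonneg hd0
      rw [h1]
      calc d * |H (w x)| ≤ (2 * M) * |H (w x)| :=
            mul_le_mul_of_nonneg_right hdM (abs_nonneg _)
        _ ≤ 2 * M * B := mul_le_mul_of_nonneg_left hax (by positivity)
  have step1 : (∫ x in (-L)..L, (deriv w x) ^ 2 * a x) ≤
      ∫ x in (-L)..L, deriv w x * H (w x) := by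
    apply intervalIntegral.integral_mono_ae_restrict hLL.le Int1 Int2
    rw [Filter.EventuallyLE, ae_restrict_iff' measurableSet_Icc]
    filter_upwards [haeL, haemL] with x hne hnem hxIcc
    rcases eq_or_lt_of_le hxIcc.1 with heq | h1
    · exact absurd heq.symm hnem
    rcases eq_or_lt_of_le hxIcc.2 with heq | h2
    · exact absurd heq hne
    obtain ⟨d, hd, _, _, hineq⟩ := hkey x ⟨h1, h2⟩
    rw [hd.deriv]
    exact hineq
  have hΦd : ∀ x ∈ Ioo (-L) L, HasDerivAt (fun y => Ψ (w y)) (deriv w x * H (w x)) x := by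
    intro x hx
    obtain ⟨d, hd, _, _, _⟩ := hkey x hx
    have h1 : HasDerivAt Ψ (H (w x)) (w x) := hΨd (w x) (hwIoo x hx)
    have h2 := h1.comp x hd
    rw [hd.deriv, mul_comm]
    exact h2
  have step2 : (∫ x in (-L)..L, deriv w x * H (w x)) = Ψ m - Ψ (-m) := by
    have h := intervalIntegral.integral_eq_sub_of_hasDerivAt_of_le hLL.le
      (hΨcont.comp hwcont hwmaps) hΦd Int2
    simp only [Function.comp_apply] at h
    rw [hwR, hwL] at h
    exact h
  have hΨ0 : Ψ (-m) = 0 := intervalIntegral.integral_same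
  have hgint : IntervalIntegrable g volume (-m) m := by
    apply ContinuousOn.intervalIntegrable
    rwa [uIcc_of_le hmm.le]
  have hgnint : IntervalIntegrable (fun p => g (-p)) volume (-m) m := by
    apply ContinuousOn.intervalIntegrable
    rwa [uIcc_of_le hmm.le]
  have step3 : Ψ m = t * (∫ p in (-m)..m, g p) + (1 - t) * (∫ p in (-m)..m, g p) := by
    have hneg_eq : (∫ p in (-m)..m, g (-p)) = ∫ p in (-m)..m, g p := by
      have h := intervalIntegral.integral_comp_neg (a := -m) (b := m) (f := g)
      simpa using h
    calc Ψ m = (∫ p in (-m)..m, t * g p) + ∫ p in (-m)..m, (1 - t) * g (-p) :=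
      intervalIntegral.integral_add (hgint.const_mul t) (hgnint.const_mul (1 - t))
    _ = t * (∫ p in (-m)..m, g p) + (1 - t) * ∫ p in (-m)..m, g (-p) := by
      rw [intervalIntegral.integral_const_mul, intervalIntegral.integral_const_mul]
    _ = _ := by rw [hneg_eq]
  have step4 : (∫ p in (-m)..m, g p) = ∫ x in (-L)..L, (V x) ^ 2 * a x := by
    have hf1 : ContinuousOn v (uIcc (-L) L) := by
      rw [uIcc_of_le hLL.le]; exact hv.continuousOn
    have hff1 : ∀ x ∈ Ioo (min (-L) L) (max (-L) L), HasDerivWithinAt v (V x) (Ioi x) x := by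
      intro x hx
      rw [min_eq_left hLL.le, max_eq_right hLL.le] at hx
      exact (hvd x hx).hasDerivWithinAt
    have hf'1 : ContinuousOn V (uIcc (-L) L) := by
      rw [uIcc_of_le hLL.le]; exact hVcont
    have hg1 : ContinuousOn g (v '' uIcc (-L) L) := by
      apply hgcont.mono
      rw [uIcc_of_le hLL.le]
      exact hvmaps.image_subset
    have hcv := intervalIntegral.integral_comp_smul_deriv'' hf1 hff1 hf'1 hg1
    rw [hvL, hvR] at hcv
    rw [← hcv]
    apply intervalIntegral.integral_congr
    intro x hx
    rw [uIcc_of_le hLL.le] at hx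
    simp only [Function.comp, smul_eq_mul, hgdef]
    rw [hρv x hx]
    ring
  have step5 : (∫ x in (-L)..L, (deriv v x) ^ 2 * a x) = ∫ x in (-L)..L, (V x) ^ 2 * a x := by
    apply intervalIntegral.integral_congr_ae
    filter_upwards [haeL] with x hne hxI
    rw [uIoc_of_le hLL.le] at hxI
    have hxIoo : x ∈ Ioo (-L) L := ⟨hxI.1, lt_of_le_of_ne hxI.2 hne⟩
    rw [(hvd x hxIoo).deriv]
  calc (∫ x in (-L)..L, (deriv w x) ^ 2 * a x)
      ≤ ∫ x in (-L)..L, deriv w x * H (w x) := step1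
    _ = Ψ m - Ψ (-m) := step2
    _ = t * (∫ p in (-m)..m, g p) + (1 - t) * (∫ p in (-m)..m, g p) := by
        rw [hΨ0, sub_zero]; exact step3
    _ = ∫ p in (-m)..m, g p := by ring
    _ = ∫ x in (-L)..L, (V x) ^ 2 * a x := step4
    _ = ∫ x in (-L)..L, (deriv v x) ^ 2 * a x := step5.symm
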